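/- (Collinear case) Let a, b, c ∈ ℝ² be collinear with b on segment ac, let a', b', c' ∈ ℝ², and suppose {(a,a'),(b,b'),(c,c')} is a max-sum matching of {a,b,c} and {a',b',c'} for the squared Euclidean distance. Then the disks B(aa'), B(bb'), B(cc') have a common point; moreover a common point can be found on the line through a and c or equal to a or c. -/

import Mathlib

open RealInnerProductSpace

private lemma quad_nonpos {l r t : ℝ} (h1 : min l r ≤ t) (h2 : t ≤ max l r) :
    (t - l) * (t - r) ≤ 0 := by
  rcases le_total l r with h | h
  · rw [min_eq_left h] at h1; rw [max_eq_right h] at h2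
    exact mul_nonpos_of_nonneg_of_nonpos (by linarith) (by linarith)
  · rw [min_eq_right h] at h1; rw [max_eq_left h] at h2
    exact mul_nonpos_of_nonpos_of_nonneg (by linarith) (by linarith)

private lemma mem_diam_ball {o p q : EuclideanSpace ℝ (Fin 2)}
    (h : ⟪o - p, o - q⟫ ≤ 0) :
    o ∈ Metric.closedBall (midpoint ℝ p q) (dist p q / 2) := by
  rw [Metric.mem_closedBall, dist_eq_norm, dist_eq_norm]
  rw [midpoint_eq_smul_add]
  have key : ‖o - (2⁻¹ : ℝ) • (p + q)‖ ^ 2 = (‖p - q‖ / 2) ^ 2 + ⟪o - p, o - q⟫ := by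
    rw [div_pow, ← real_inner_self_eq_norm_sq, ← real_inner_self_eq_norm_sq]
    simp only [inner_sub_left, inner_sub_right, inner_add_left, inner_add_right,
      real_inner_smul_left, real_inner_smul_right]
    rw [real_inner_comm p o, real_inner_comm q o, real_inner_comm q p]
    ring
  have h2 : ‖o - (2⁻¹ : ℝ) • (p + q)‖ ^ 2 ≤ (‖p - q‖ / 2) ^ 2 := by linarith
  exact le_of_pow_le_pow_left₀ two_ne_zero (by positivity) h2

private lemma inner_param (u a p' : EuclideanSpace ℝ (Fin 2)) (t r : ℝ) :
    ⟪(t • u + a) - (r • u + a), (t • u + a) - p'⟫ =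
      (t - r) * (t * ‖u‖ ^ 2 - ⟪u, p' - a⟫) := by
  rw [← real_inner_self_eq_norm_sq]
  simp only [inner_sub_left, inner_sub_right, inner_add_left, inner_add_right,
    real_inner_smul_left, real_inner_smul_right]
  rw [real_inner_comm a u]
  ring

set_option maxHeartbeats 1000000 in
theorem maxsum_collinear_case
    (a b c a' b' c' : EuclideanSpace ℝ (Fin 2))
    (hcol : b ∈ segment ℝ a c)
    (hmax : ∀ σ : Equiv.Perm (Fin 3),
      ∑ i, ‖![a, b, c] i - ![a', b', c'] (σ i)‖ ^ 2 ≤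
        ‖a - a'‖ ^ 2 + ‖b - b'‖ ^ 2 + ‖c - c'‖ ^ 2) :
    ∃ o : EuclideanSpace ℝ (Fin 2),
      o ∈ Metric.closedBall (midpoint ℝ a a') (dist a a' / 2) ∧
      o ∈ Metric.closedBall (midpoint ℝ b b') (dist b b' / 2) ∧
      o ∈ Metric.closedBall (midpoint ℝ c c') (dist c c' / 2) ∧
      (o ∈ line[ℝ, a, c] ∨ o = a ∨ o = c) := by
  -- Extract the transposition inequalities
  have hab : ⟪a - b, a' - b'⟫ ≤ 0 := by
    have h1 := hmax (Equiv.swap 0 1)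
    simp [Fin.sum_univ_three, Equiv.swap_apply_def] at h1
    simp only [norm_sub_sq_real, inner_sub_left, inner_sub_right] at h1 ⊢
    linarith [real_inner_comm a b', real_inner_comm b a']
  have hbc : ⟪b - c, b' - c'⟫ ≤ 0 := by
    have h1 := hmax (Equiv.swap 1 2)
    simp [Fin.sum_univ_three, Equiv.swap_apply_def, Fin.ext_iff] at h1
    simp only [norm_sub_sq_real, inner_sub_left, inner_sub_right] at h1 ⊢
    linarith [real_inner_comm b c', real_inner_comm c b']
  have hac : ⟪a - c, a' - c'⟫ ≤ 0 := by
    have h1 := hmax (Equiv.swap 0 2)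
    simp [Fin.sum_univ_three, Equiv.swap_apply_def] at h1
    simp only [norm_sub_sq_real, inner_sub_left, inner_sub_right] at h1 ⊢
    linarith [real_inner_comm a c', real_inner_comm c a']
  by_cases hacq : a = c
  · -- degenerate case: a = c, hence b = a
    have hb : b = a := by
      rw [← hacq] at hcol; simpa using hcol
    refine ⟨a, mem_diam_ball (by simp), mem_diam_ball ?_, mem_diam_ball ?_,
      Or.inr (Or.inl rfl)⟩
    · rw [hb]; simp
    · rw [← hacq]; simp
  · -- main case
    have hu : c - a ≠ 0 := sub_ne_zero_of_ne (Ne.symm hacq)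
    set u : EuclideanSpace ℝ (Fin 2) := c - a with hudef
    set K : ℝ := ‖u‖ ^ 2 with hKdef
    have hK : (0:ℝ) < K := pow_pos (norm_pos_iff.mpr hu) 2
    obtain ⟨x, s, hx0, hs0, hxs, H⟩ := hcol
    have hs1 : s ≤ 1 := by linarith
    have hbeq : b = s • u + a := by
      rw [← H]
      have hx : x = 1 - s := by linarith
      rw [hx, hudef, smul_sub, sub_smul, one_smul]; abel
    have hceq : c = (1:ℝ) • u + a := by rw [one_smul, hudef]; abel
    set A : ℝ := ⟪u, a' - a⟫ / K with hA
    set B : ℝ := ⟪u, b' - a⟫ / K with hB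
    set C : ℝ := ⟪u, c' - a⟫ / K with hC
    have hAK : ⟪u, a' - a⟫ = A * K := by rw [hA]; field_simp
    have hBK : ⟪u, b' - a⟫ = B * K := by rw [hB]; field_simp
    have hCK : ⟪u, c' - a⟫ = C * K := by rw [hC]; field_simp
    -- translate the transposition inequalities
    have h1 : 0 ≤ s * (A - B) := by
      have e : ⟪a - b, a' - b'⟫ = -s * (A * K - B * K) := by
        rw [hbeq, ← hAK, ← hBK]
        simp only [inner_sub_left, inner_sub_right, inner_add_left, inner_add_right,
          real_inner_smul_left, real_inner_smul_right]
        rw [real_inner_comm a u]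
        ring
      rw [e] at hab
      nlinarith
    have h2 : 0 ≤ (1 - s) * (B - C) := by
      have e : ⟪b - c, b' - c'⟫ = (s - 1) * (B * K - C * K) := by
        rw [hbeq, hceq, ← hBK, ← hCK]
        simp only [inner_sub_left, inner_sub_right, inner_add_left, inner_add_right,
          real_inner_smul_left, real_inner_smul_right]
        rw [real_inner_comm a u]
        ring
      rw [e] at hbc
      nlinarith
    have h3 : C ≤ A := by
      have e : ⟪a - c, a' - c'⟫ = -(A * K - C * K) := by
        rw [hceq, ← hAK, ← hCK]
        simp only [inner_sub_left, inner_sub_right, inner_add_left, inner_add_right,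
          real_inner_smul_left, real_inner_smul_right]
        rw [real_inner_comm a u]
        ring
      rw [e] at hac
      nlinarith
    -- the common parameter
    set t : ℝ := max (min 0 A) (max (min s B) (min 1 C)) with ht
    have hAB : min s B ≤ max 0 A := by
      rcases eq_or_lt_of_le hs0 with h | h
      · exact le_trans (le_trans (min_le_left _ _) h.symm.le) (le_max_left _ _)
      · have : B ≤ A := sub_nonneg.mp (nonneg_of_mul_nonneg_right h1 h)
        exact le_trans (le_trans (min_le_right _ _) this) (le_max_right _ _)
    have hAC : min 1 C ≤ max 0 A :=
      le_trans (min_le_right _ _) (le_trans h3 (le_max_right _ _))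
    have hCB : min 1 C ≤ max s B := by
      rcases eq_or_lt_of_le hs1 with h | h
      · exact le_trans (le_trans (min_le_left _ _) h.ge) (le_max_left _ _)
      · have : C ≤ B := sub_nonneg.mp (nonneg_of_mul_nonneg_right h2 (by linarith))
        exact le_trans (le_trans (min_le_right _ _) this) (le_max_right _ _)
    have htA : min 0 A ≤ t ∧ t ≤ max 0 A :=
      ⟨le_max_left _ _, max_le min_le_max (max_le hAB hAC)⟩
    have htB : min s B ≤ t ∧ t ≤ max s B :=
      ⟨le_trans (le_max_left _ _) (le_max_right _ _),
        max_le (le_trans (min_le_left _ _) (le_trans hs0 (le_max_left _ _)))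
          (max_le min_le_max hCB)⟩
    have htC : min 1 C ≤ t ∧ t ≤ max 1 C :=
      ⟨le_trans (le_max_right _ _) (le_max_right _ _),
        max_le (le_trans (min_le_left _ _)
            (le_trans (le_trans hs0 hs1) (le_max_left _ _)))
          (max_le (le_trans (min_le_left _ _) (le_trans hs1 (le_max_left _ _)))
            min_le_max)⟩
    refine ⟨t • u + a, mem_diam_ball ?_, mem_diam_ball ?_, mem_diam_ball ?_, Or.inl ?_⟩
    · have e : ⟪(t • u + a) - a, (t • u + a) - a'⟫ = t * (t * K - ⟪u, a' - a⟫) := by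
        have := inner_param u a a' t 0
        simpa using this
      rw [e, hAK]
      have hq : (t - 0) * (t - A) ≤ 0 := quad_nonpos htA.1 htA.2
      calc t * (t * K - A * K) = ((t - 0) * (t - A)) * K := by ring
        _ ≤ 0 := mul_nonpos_of_nonpos_of_nonneg hq hK.le
    · have e : ⟪(t • u + a) - b, (t • u + a) - b'⟫ = (t - s) * (t * K - ⟪u, b' - a⟫) := by
        rw [hbeq]; exact inner_param u a b' t s
      rw [e, hBK]
      have hq : (t - s) * (t - B) ≤ 0 := quad_nonpos htB.1 htB.2
      calc (t - s) * (t * K - B * K) = ((t - s) * (t - B)) * K := by ring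
        _ ≤ 0 := mul_nonpos_of_nonpos_of_nonneg hq hK.le
    · have e : ⟪(t • u + a) - c, (t • u + a) - c'⟫ = (t - 1) * (t * K - ⟪u, c' - a⟫) := by
        rw [hceq]; exact inner_param u a c' t 1
      rw [e, hCK]
      have hq : (t - 1) * (t - C) ≤ 0 := quad_nonpos htC.1 htC.2
      calc (t - 1) * (t * K - C * K) = ((t - 1) * (t - C)) * K := by ring
        _ ≤ 0 := mul_nonpos_of_nonpos_of_nonneg hq hK.le
    · rw [hudef, ← AffineMap.lineMap_apply_module']
      exact AffineMap.lineMap_mem_affineSpan_pair t a c
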